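/- For a positively folded alcove walk p, the signed length of p equals the signed length of its end alcove: ε(p) = ε^+(p) − ε^−(p) = ε(end(p)). In particular, if p ends in t_μ φ(p) with φ(p) ∈ W_0, then ε(p) = ⟨μ, 2ρ⟩ − ℓ(φ(p)). -/

import Mathlib

open scoped RealInnerProductSpace BigOperators

attribute [local instance] Classical.propDecidable

noncomputable section

variable {V : Type*} [NormedAddCommGroup V] [InnerProductSpace ℝ V]

/-- The coroot `α^∨ = 2α/⟨α,α⟩` of a root `α`. -/
def coroot' (α : V) : V := (2 / ⟪α, α⟫) • α

/-- The reflection `s_α` in the linear hyperplane orthogonal to `α`. -/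
def sref (α : V) : V → V := fun x => x - ⟪x, α⟫ • coroot' α

/-- Data of a reduced irreducible crystallographic root system `R` (recorded via its
positive system `Rpos` and simple roots `simple`) in a real inner product space. -/
structure RSData (V : Type*) [NormedAddCommGroup V] [InnerProductSpace ℝ V] (n : ℕ) where
  Rpos : Finset V
  simple : Fin n → V
  hsimple : ∀ i, simple i ∈ Rpos
  hnz : ∀ α ∈ Rpos, α ≠ 0
  hdisj : ∀ α ∈ Rpos, -α ∉ Rpos
  hind : LinearIndependent ℝ simple
  hspan : Submodule.span ℝ (Set.range simple) = ⊤
  hposcomb : ∀ β ∈ Rpos, ∃ c : Fin n → ℕ, β = ∑ i, (c i : ℝ) • simple i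
  hrefl : ∀ α ∈ Rpos, ∀ β ∈ Rpos, sref α β ∈ Rpos ∨ -(sref α β) ∈ Rpos
  hcrys : ∀ α ∈ Rpos, ∀ β ∈ Rpos, ∃ z : ℤ, ⟪β, coroot' α⟫ = (z : ℝ)
  hred : ∀ α ∈ Rpos, ∀ c : ℝ, c • α ∈ Rpos → c = 1
  hirr : ∀ S : Set V, (∀ α ∈ Rpos, ∀ β ∈ Rpos, α ∈ S → ⟪α, β⟫ ≠ 0 → β ∈ S) →
      (∃ α ∈ Rpos, α ∈ S) → ∀ β ∈ Rpos, β ∈ S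

/-- The finite Weyl group `W₀`, realized as the set of all compositions of the
reflections `s_α`, `α ∈ R`. -/
def W0Set (Rpos : Finset V) : Set (V → V) :=
  {w | ∃ l : List V, (∀ a ∈ l, a ∈ Rpos) ∧ w = l.foldr (fun a f => sref a ∘ f) id}

/-- Pairs `(α, k)` (with `α ∈ R⁺`) indexing affine hyperplanes
`H_{α+kδ} = {v | ⟪v,α⟫ + k = 0}` that are crossed positively when moving from `x` to `y`
(i.e. `x` lies on the negative side and `y` on the positive side). -/
def sepPos (Rpos : Finset V) (x y : V) : Set (V × ℤ) :=
  {q | q.1 ∈ Rpos ∧ ⟪x, q.1⟫ + (q.2 : ℝ) < 0 ∧ 0 < ⟪y, q.1⟫ + (q.2 : ℝ)}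

/-- The signed number of affine hyperplanes separating `x` from `y`:
positively crossed ones minus negatively crossed ones. -/
def signedLen (Rpos : Finset V) (x y : V) : ℤ :=
  (Nat.card (sepPos Rpos x y) : ℤ) - (Nat.card (sepPos Rpos y x) : ℤ)

/-- The total number of affine hyperplanes separating `x` from `y`. -/
def totalLen (Rpos : Finset V) (x y : V) : ℕ :=
  Nat.card (sepPos Rpos x y) + Nat.card (sepPos Rpos y x)

/-- Labels for the generators `s_0, s_1, …, s_n` of the affine Weyl group:
`none` is the affine generator `s_0`, `some i` is the finite generator `s_i`. -/
def Gen (n : ℕ) := Option (Fin n)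

/-- The affine reflection in the hyperplane `H_{α+kδ} = {x | ⟪x,α⟫ + k = 0}`. -/
def aref (α : V) (k : ℝ) : V → V := fun x => x - (⟪x, α⟫ + k) • coroot' α

/-- The root attached to a generator: `θ` (the highest root) for `s_0`,
and `α_i` for `s_i`. -/
def genRoot {n : ℕ} (D : RSData V n) (θ : V) : Gen n → V
  | none => θ
  | some j => D.simple j

/-- The integer `k` with `s_i` the reflection in `H_{genRoot i + kδ}`:
`k = -1` for `s_0` and `k = 0` otherwise. -/
def genK {n : ℕ} : Gen n → ℤ
  | none => -1
  | some _ => 0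

/-- The simple affine reflections `s_0, …, s_n`. -/
def sgen {n : ℕ} (D : RSData V n) (θ : V) (i : Gen n) : V → V :=
  aref (genRoot D θ i) ((genK i : ℤ) : ℝ)

/-- An alcove walk is encoded by its list of steps: each step records the generator
label (its type) and a Boolean, `true` for a crossing and `false` for a fold.
`walkMap` is the element of the (extended) affine Weyl group, realized as an affine
transformation of `V`, representing the alcove reached at the end of the walk
started at the fundamental alcove `1`. -/
def walkMap {n : ℕ} (D : RSData V n) (θ : V) (steps : List (Gen n × Bool)) : V → V :=
  steps.foldl (fun g s => if s.2 = true then g ∘ sgen D θ s.1 else g) id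

/-- The generator label of the `j`-th step. -/
def stepGen {n : ℕ} (steps : List (Gen n × Bool)) (j : ℕ) : Gen n :=
  (steps.getD j (none, true)).1

/-- Whether the `j`-th step is a crossing (rather than a fold). -/
def crossAt {n : ℕ} (steps : List (Gen n × Bool)) (j : ℕ) : Prop :=
  (steps.getD j (none, true)).2 = true

/-- The direction vector of the wall met at the `j`-th step of the walk. -/
def wallDir {n : ℕ} (D : RSData V n) (θ : V) (steps : List (Gen n × Bool)) (j : ℕ) : V :=
  walkMap D θ (steps.take j) (genRoot D θ (stepGen steps j))
    - walkMap D θ (steps.take j) 0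

/-- The positive root `β` such that the wall met at the `j`-th step is `H_{β+mδ}`. -/
def wallRoot {n : ℕ} (D : RSData V n) (θ : V) (steps : List (Gen n × Bool)) (j : ℕ) : V :=
  if wallDir D θ steps j ∈ D.Rpos then wallDir D θ steps j else -wallDir D θ steps j

/-- The constant `m` such that the wall met at the `j`-th step is
`H_{β+mδ} = {x | ⟪x,β⟫ + m = 0}` with `β = wallRoot` positive. -/
def wallConst {n : ℕ} (D : RSData V n) (θ : V) (steps : List (Gen n × Bool)) (j : ℕ) : ℝ :=
  if wallDir D θ steps j ∈ D.Rpos then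
    ((genK (stepGen steps j) : ℤ) : ℝ) - ⟪walkMap D θ (steps.take j) 0, wallDir D θ steps j⟫
  else
    ⟪walkMap D θ (steps.take j) 0, wallDir D θ steps j⟫ - ((genK (stepGen steps j) : ℤ) : ℝ)

/-- The position of the alcove occupied before the `j`-th step relative to the wall met
at the `j`-th step: negative means the alcove is on the negative side. -/
def sideAt {n : ℕ} (D : RSData V n) (θ p₀ : V) (steps : List (Gen n × Bool)) (j : ℕ) : ℝ :=
  ⟪walkMap D θ (steps.take j) p₀, wallRoot D θ steps j⟫ + wallConst D θ steps j

/-- `ε⁺(p)`: the number of positive crossings. -/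
def numPosCross {n : ℕ} (D : RSData V n) (θ p₀ : V) (steps : List (Gen n × Bool)) : ℕ :=
  ((Finset.range steps.length).filter fun j =>
    crossAt steps j ∧ sideAt D θ p₀ steps j < 0).card

/-- `ε⁻(p)`: the number of negative crossings. -/
def numNegCross {n : ℕ} (D : RSData V n) (θ p₀ : V) (steps : List (Gen n × Bool)) : ℕ :=
  ((Finset.range steps.length).filter fun j =>
    crossAt steps j ∧ 0 < sideAt D θ p₀ steps j).card

/-- `f(p)`: the number of folds. -/
def numFolds {n : ℕ} (steps : List (Gen n × Bool)) : ℕ :=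
  ((Finset.range steps.length).filter fun j => ¬ crossAt steps j).card

/-- A walk is positively folded when every fold leaves the walk on the positive side of
the wall on which it folds. -/
def PosFolded {n : ℕ} (D : RSData V n) (θ p₀ : V) (steps : List (Gen n × Bool)) : Prop :=
  ∀ j < steps.length, ¬ crossAt steps j → 0 < sideAt D θ p₀ steps j

/-- `dim(p) = ε⁺(p) + f(p)`. -/
def walkDim {n : ℕ} (D : RSData V n) (θ p₀ : V) (steps : List (Gen n × Bool)) : ℕ :=
  numPosCross D θ p₀ steps + numFolds steps

/-- `ρ`, the half sum of the positive roots. -/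
def halfSum {n : ℕ} (D : RSData V n) : V := (1 / 2 : ℝ) • ∑ α ∈ D.Rpos, α

/-- The length `ℓ(w)` of an element of the finite Weyl group `W₀`, computed as the number
of (automatically linear) hyperplanes separating the fundamental alcove from its image. -/
def finLen {n : ℕ} (D : RSData V n) (p₀ : V) (w : V → V) : ℕ :=
  Nat.card {α : V | α ∈ D.Rpos ∧ ⟪w p₀, α⟫ < 0}


section Basics

lemma inner_self_pos' {a : V} (ha : a ≠ 0) : 0 < ⟪a, a⟫ := by
  rcases lt_or_eq_of_le (real_inner_self_nonneg (x := a)) with h | h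
  · exact h
  · exact absurd (inner_self_eq_zero.mp h.symm) ha

lemma coroot'_neg (a : V) : coroot' (-a) = - coroot' a := by
  simp [coroot', smul_neg]

lemma inner_coroot'_self (a : V) (ha : a ≠ 0) : ⟪coroot' a, a⟫ = 2 := by
  have h : ⟪a, a⟫ ≠ 0 := ne_of_gt (inner_self_pos' ha)
  rw [coroot', real_inner_smul_left]
  field_simp

lemma inner_self_coroot' (a : V) (ha : a ≠ 0) : ⟪a, coroot' a⟫ = 2 := by
  rw [real_inner_comm]; exact inner_coroot'_self a ha

lemma sref_inner_self (a x : V) (ha : a ≠ 0) : ⟪sref a x, a⟫ = -⟪x, a⟫ := by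
  have h : ⟪a, a⟫ ≠ 0 := ne_of_gt (inner_self_pos' ha)
  rw [sref, inner_sub_left, real_inner_smul_left, coroot', real_inner_smul_left]
  field_simp; ring

lemma inner_sref (a x y : V) : ⟪sref a x, y⟫ = ⟪x, sref a y⟫ := by
  simp only [sref, coroot', inner_sub_left, inner_sub_right, real_inner_smul_left,
    real_inner_smul_right]
  rw [real_inner_comm a y]
  ring

lemma sref_sref (a x : V) (ha : a ≠ 0) : sref a (sref a x) = x := by
  rw [sref, sref_inner_self a x ha, sref]
  module

lemma sref_add (a x y : V) : sref a (x + y) = sref a x + sref a y := by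
  simp only [sref, inner_add_left]; module

lemma sref_smul (a : V) (c : ℝ) (x : V) : sref a (c • x) = c • sref a x := by
  simp only [sref, real_inner_smul_left]; module

lemma sref_neg (a x : V) : sref a (-x) = - sref a x := by
  simp only [sref, inner_neg_left]; module

lemma sref_sub (a x y : V) : sref a (x - y) = sref a x - sref a y := by
  simp only [sref, inner_sub_left]; module

lemma sref_zero (a : V) : sref a 0 = 0 := by
  simp [sref]

lemma sref_isom (a x y : V) (ha : a ≠ 0) : ⟪sref a x, sref a y⟫ = ⟪x, y⟫ := by
  rw [inner_sref, sref_sref a y ha]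

end Basics

section RS

variable {n : ℕ} (D : RSData V n)

/-- Composition of reflections along a list of roots. -/
def wl : List V → V → V := fun l => l.foldr (fun a f => sref a ∘ f) id

lemma wl_nil (x : V) : wl [] x = x := rfl

lemma wl_cons (a : V) (l : List V) (x : V) : wl (a :: l) x = sref a (wl l x) := rfl

lemma wl_append (l₁ l₂ : List V) (x : V) : wl (l₁ ++ l₂) x = wl l₁ (wl l₂ x) := by
  induction l₁ with
  | nil => rfl
  | cons a l ih => simp only [List.cons_append, wl_cons, ih]

lemma wl_adjoint (l : List V) (x y : V) : ⟪wl l x, y⟫ = ⟪x, wl l.reverse y⟫ := by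
  induction l generalizing y with
  | nil => rfl
  | cons a l ih =>
      rw [wl_cons, inner_sref, ih, List.reverse_cons, wl_append]
      rfl

lemma wl_add (l : List V) (x y : V) : wl l (x + y) = wl l x + wl l y := by
  induction l with
  | nil => rfl
  | cons a l ih => rw [wl_cons, wl_cons, wl_cons, ih, sref_add]

lemma wl_smul (l : List V) (c : ℝ) (x : V) : wl l (c • x) = c • wl l x := by
  induction l with
  | nil => rfl
  | cons a l ih => rw [wl_cons, wl_cons, ih, sref_smul]

lemma wl_neg (l : List V) (x : V) : wl l (-x) = - wl l x := by
  induction l with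
  | nil => rfl
  | cons a l ih => rw [wl_cons, wl_cons, ih, sref_neg]

lemma wl_sub (l : List V) (x y : V) : wl l (x - y) = wl l x - wl l y := by
  induction l with
  | nil => rfl
  | cons a l ih => rw [wl_cons, wl_cons, wl_cons, ih, sref_sub]

lemma wl_zero (l : List V) : wl l 0 = 0 := by
  induction l with
  | nil => rfl
  | cons a l ih => rw [wl_cons, ih, sref_zero]

lemma wl_inv (l : List V) (hl : ∀ a ∈ l, a ∈ D.Rpos) (x : V) :
    wl l.reverse (wl l x) = x := by
  induction l generalizing x with
  | nil => rfl
  | cons a l ih =>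
      have ha : a ≠ 0 := D.hnz a (hl a List.mem_cons_self)
      rw [wl_cons, List.reverse_cons, wl_append]
      have : wl [a] (sref a (wl l x)) = wl l x := by
        show sref a (sref a (wl l x)) = wl l x
        exact sref_sref a _ ha
      rw [this, ih (fun b hb => hl b (List.mem_cons_of_mem a hb))]

lemma wl_inv' (l : List V) (hl : ∀ a ∈ l, a ∈ D.Rpos) (x : V) :
    wl l (wl l.reverse x) = x := by
  have := wl_inv D l.reverse (fun b hb => hl b (List.mem_reverse.1 hb)) x
  rwa [List.reverse_reverse] at this

lemma wl_isom (l : List V) (hl : ∀ a ∈ l, a ∈ D.Rpos) (x y : V) :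
    ⟪wl l x, wl l y⟫ = ⟪x, y⟫ := by
  rw [wl_adjoint, wl_inv D l hl]

/-- `x` is a root (positive or negative). -/
def InR (x : V) : Prop := x ∈ D.Rpos ∨ -x ∈ D.Rpos

lemma InR_neg {x : V} (h : InR D x) : InR D (-x) := by
  rcases h with h | h
  · exact Or.inr (by rwa [neg_neg])
  · exact Or.inl h

lemma sref_InR {a x : V} (ha : a ∈ D.Rpos) (hx : InR D x) : InR D (sref a x) := by
  rcases hx with h | h
  · exact D.hrefl a ha x h
  · rcases D.hrefl a ha (-x) h with h' | h'
    · exact Or.inr (by rwa [sref_neg] at h')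
    · exact Or.inl (by rw [sref_neg] at h'; rwa [neg_neg] at h')

lemma wl_InR {l : List V} (hl : ∀ a ∈ l, a ∈ D.Rpos) {x : V} (hx : InR D x) :
    InR D (wl l x) := by
  induction l with
  | nil => exact hx
  | cons a l ih =>
      rw [wl_cons]
      exact sref_InR D (hl a List.mem_cons_self)
        (ih (fun b hb => hl b (List.mem_cons_of_mem a hb)))

/-- all pairings of `t` against roots are integers. -/
def IntPair (t : V) : Prop := ∀ β ∈ D.Rpos, ∃ z : ℤ, ⟪t, β⟫ = (z : ℝ)

lemma IntPair_zero : IntPair D (0 : V) := fun β _ => ⟨0, by simp⟩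

lemma IntPair_inner {t : V} (ht : IntPair D t) {x : V} (hx : InR D x) :
    ∃ z : ℤ, ⟪t, x⟫ = (z : ℝ) := by
  rcases hx with h | h
  · exact ht x h
  · rcases ht (-x) h with ⟨z, hz⟩
    exact ⟨-z, by rw [inner_neg_right] at hz; push_cast; linarith⟩

lemma IntPair_coroot {α : V} (hα : α ∈ D.Rpos) {x : V} (hx : InR D x) :
    ∃ z : ℤ, ⟪coroot' α, x⟫ = (z : ℝ) := by
  rcases hx with h | h
  · rcases D.hcrys α hα x h with ⟨z, hz⟩
    exact ⟨z, by rwa [real_inner_comm]⟩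
  · rcases D.hcrys α hα (-x) h with ⟨z, hz⟩
    refine ⟨-z, ?_⟩
    rw [real_inner_comm] at hz
    rw [inner_neg_right] at hz
    push_cast; linarith

/-- A point not on any affine root hyperplane. -/
def Generic (x : V) : Prop := ∀ β ∈ D.Rpos, ∀ z : ℤ, ⟪x, β⟫ ≠ (z : ℝ)

lemma Generic_inner {x : V} (hx : Generic D x) {y : V} (hy : InR D y) (z : ℤ) :
    ⟪x, y⟫ ≠ (z : ℝ) := by
  rcases hy with h | h
  · exact hx y h z
  · intro hc
    have := hx (-y) h (-z)
    rw [inner_neg_right, hc] at this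
    push_cast at this
    exact this rfl

lemma Generic_affine {l : List V} (hl : ∀ a ∈ l, a ∈ D.Rpos) {t : V} (ht : IntPair D t)
    {x : V} (hx : Generic D x) : Generic D (wl l x + t) := by
  intro β hβ z hc
  rw [inner_add_left, wl_adjoint] at hc
  rcases ht β hβ with ⟨z', hz'⟩
  have hInR : InR D (wl l.reverse β) :=
    wl_InR D (fun b hb => hl b (List.mem_reverse.1 hb)) (Or.inl hβ)
  refine Generic_inner D hx hInR (z - z') ?_
  rw [hz'] at hc
  push_cast
  linarith

end RS

section Comb

variable {n : ℕ} (D : RSData V n)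

/-- nonnegative combination of the simple roots. -/
def NNC (x : V) : Prop := ∃ c : Fin n → ℝ, (∀ i, 0 ≤ c i) ∧ x = ∑ i, c i • D.simple i

lemma coeff_unique {c d : Fin n → ℝ}
    (h : ∑ i, c i • D.simple i = ∑ i, d i • D.simple i) : c = d := by
  have h0 : ∑ i, (c i - d i) • D.simple i = 0 := by
    simp only [sub_smul, Finset.sum_sub_distrib, h, sub_self]
  have := Fintype.linearIndependent_iff.mp D.hind (fun i => c i - d i) h0
  funext i
  have hi := this i
  linarith

lemma single_comb (r : ℝ) (i : Fin n) :
    r • D.simple i = ∑ j, (if j = i then r else 0) • D.simple j := by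
  have h : ∀ j, (if j = i then r else 0) • D.simple j
      = if j = i then r • D.simple j else 0 := by
    intro j; by_cases hj : j = i <;> simp [hj]
  simp only [h, Finset.sum_ite_eq' Finset.univ i, Finset.mem_univ, if_true]

lemma NNC_add {x y : V} (hx : NNC D x) (hy : NNC D y) : NNC D (x + y) := by
  rcases hx with ⟨c, hc, hcx⟩; rcases hy with ⟨d, hd, hdy⟩
  refine ⟨fun i => c i + d i, fun i => add_nonneg (hc i) (hd i), ?_⟩
  simp only [add_smul, Finset.sum_add_distrib, hcx, hdy]

lemma NNC_smul {x : V} (r : ℝ) (hr : 0 ≤ r) (hx : NNC D x) : NNC D (r • x) := by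
  rcases hx with ⟨c, hc, hcx⟩
  refine ⟨fun i => r * c i, fun i => mul_nonneg hr (hc i), ?_⟩
  rw [hcx, Finset.smul_sum]
  exact Finset.sum_congr rfl (fun i _ => by rw [smul_smul])

lemma NNC_root {α : V} (hα : α ∈ D.Rpos) : NNC D α := by
  rcases D.hposcomb α hα with ⟨c, hc⟩
  exact ⟨fun i => (c i : ℝ), fun i => Nat.cast_nonneg _, hc⟩

lemma NNC_eq_zero {x : V} (hx : NNC D x) (hx' : NNC D (-x)) : x = 0 := by
  rcases hx with ⟨c, hc, hcx⟩; rcases hx' with ⟨d, hd, hdx⟩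
  have h : ∑ i, (c i + d i) • D.simple i = ∑ i, (0:ℝ) • D.simple i := by
    simp only [add_smul, Finset.sum_add_distrib, ← hcx, ← hdx, add_neg_cancel,
      zero_smul, Finset.sum_const_zero]
  have h2 := coeff_unique D h
  have hc0 : ∀ i, c i = 0 := by
    intro i
    have := congrFun h2 i
    have := hc i; have := hd i
    linarith
  rw [hcx]
  exact Finset.sum_eq_zero (fun i _ => by rw [hc0 i, zero_smul])

lemma sref_simple_mem (i : Fin n) {α : V} (hα : α ∈ D.Rpos) (hne : α ≠ D.simple i) :
    sref (D.simple i) α ∈ D.Rpos := by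
  rcases D.hrefl (D.simple i) (D.hsimple i) α hα with h | h
  · exact h
  · exfalso
    set γ := -(sref (D.simple i) α) with hγdef
    have hγ : γ ∈ D.Rpos := h
    have hsum : α + γ = (⟪α, D.simple i⟫ * (2 / ⟪D.simple i, D.simple i⟫)) • D.simple i := by
      rw [hγdef, sref, coroot', smul_smul]
      abel
    rcases D.hposcomb α hα with ⟨c, hc⟩
    rcases D.hposcomb γ hγ with ⟨d, hd⟩
    set r := ⟪α, D.simple i⟫ * (2 / ⟪D.simple i, D.simple i⟫) with hrdef
    have hcomb : ∑ j, ((c j : ℝ) + (d j : ℝ)) • D.simple j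
        = ∑ j, (if j = i then r else 0) • D.simple j := by
      rw [← single_comb, ← hsum, hc, hd]
      simp only [add_smul, Finset.sum_add_distrib]
    have h2 := coeff_unique D hcomb
    have hzero : ∀ j, j ≠ i → (c j : ℝ) = 0 ∧ (d j : ℝ) = 0 := by
      intro j hj
      have hthis := congrFun h2 j
      rw [if_neg hj] at hthis
      have h1 : (0:ℝ) ≤ (c j : ℝ) := Nat.cast_nonneg _
      have h2' : (0:ℝ) ≤ (d j : ℝ) := Nat.cast_nonneg _
      exact ⟨by linarith, by linarith⟩
    have hαeq : α = (c i : ℝ) • D.simple i := by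
      rw [hc]
      rw [Finset.sum_eq_single i]
      · intro j _ hj; rw [(hzero j hj).1, zero_smul]
      · intro hni; exact absurd (Finset.mem_univ i) hni
    have := D.hred (D.simple i) (D.hsimple i) (c i : ℝ) (by rw [← hαeq]; exact hα)
    rw [this, one_smul] at hαeq
    exact hne hαeq

end Comb

section Theta

variable {n : ℕ} (D : RSData V n) (θ : V)

lemma theta_dominant (hθ : θ ∈ D.Rpos)
    (hθhigh : ∀ β ∈ D.Rpos, ∃ c : Fin n → ℝ, (∀ i, 0 ≤ c i) ∧
      θ - β = ∑ i, c i • D.simple i) (i : Fin n) : 0 ≤ ⟪θ, D.simple i⟫ := by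
  by_contra hneg
  push_neg at hneg
  have hsipos : 0 < ⟪D.simple i, D.simple i⟫ :=
    inner_self_pos' (D.hnz _ (D.hsimple i))
  set r := ⟪θ, D.simple i⟫ * (2 / ⟪D.simple i, D.simple i⟫) with hrdef
  have hr : r < 0 := mul_neg_of_neg_of_pos hneg (by positivity)
  have hsref : sref (D.simple i) θ = θ - r • D.simple i := by
    rw [sref, coroot', smul_smul]
  rcases D.hrefl (D.simple i) (D.hsimple i) θ hθ with h | h
  · rcases hθhigh _ h with ⟨e, he, hee⟩
    rw [hsref] at hee
    have : θ - (θ - r • D.simple i) = r • D.simple i := by abel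
    rw [this] at hee
    have hcomb : ∑ j, (if j = i then r else 0) • D.simple j = ∑ j, e j • D.simple j := by
      rw [← single_comb, hee]
    have h2 := congrFun (coeff_unique D hcomb) i
    simp only at h2
    simp only [if_true] at h2
    have := he i
    linarith
  · have hγ : -(sref (D.simple i) θ) ∈ D.Rpos := h
    rcases D.hposcomb _ hγ with ⟨d, hd⟩
    rcases D.hposcomb θ hθ with ⟨c, hc⟩
    have hsum : -(sref (D.simple i) θ) + θ = r • D.simple i := by
      rw [hsref]; abel
    have hcomb : ∑ j, ((d j : ℝ) + (c j : ℝ)) • D.simple j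
        = ∑ j, (if j = i then r else 0) • D.simple j := by
      rw [← single_comb, ← hsum, hd, hc]
      simp only [add_smul, Finset.sum_add_distrib]
    have h2 := congrFun (coeff_unique D hcomb) i
    simp only at h2
    simp only [if_true] at h2
    have h3 : (0:ℝ) ≤ (d i : ℝ) := Nat.cast_nonneg _
    have h4 : (0:ℝ) ≤ (c i : ℝ) := Nat.cast_nonneg _
    linarith

lemma theta_inner_nonneg (hθ : θ ∈ D.Rpos)
    (hθhigh : ∀ β ∈ D.Rpos, ∃ c : Fin n → ℝ, (∀ i, 0 ≤ c i) ∧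
      θ - β = ∑ i, c i • D.simple i) {α : V} (hα : α ∈ D.Rpos) : 0 ≤ ⟪θ, α⟫ := by
  rcases D.hposcomb α hα with ⟨c, hc⟩
  rw [hc, inner_sum]
  refine Finset.sum_nonneg (fun i _ => ?_)
  rw [real_inner_smul_right]
  exact mul_nonneg (Nat.cast_nonneg _) (theta_dominant D θ hθ hθhigh i)

lemma NNC_theta_sub (hθ : θ ∈ D.Rpos)
    (hθhigh : ∀ β ∈ D.Rpos, ∃ c : Fin n → ℝ, (∀ i, 0 ≤ c i) ∧
      θ - β = ∑ i, c i • D.simple i) {α : V} (hα : α ∈ D.Rpos) : NNC D (θ - α) := by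
  rcases hθhigh α hα with ⟨c, hc, hcc⟩
  exact ⟨c, hc, hcc⟩

/-- For a positive root `α ≠ θ`, `⟪α, θ^∨⟫` is `0` or `1` (and in the latter case
`θ - α` is a positive root). -/
lemma theta_pairing (hθ : θ ∈ D.Rpos)
    (hθhigh : ∀ β ∈ D.Rpos, ∃ c : Fin n → ℝ, (∀ i, 0 ≤ c i) ∧
      θ - β = ∑ i, c i • D.simple i) {α : V} (hα : α ∈ D.Rpos) (hne : α ≠ θ) :
    ⟪α, coroot' θ⟫ = 0 ∨ (⟪α, coroot' θ⟫ = 1 ∧ θ - α ∈ D.Rpos) := by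
  set c := ⟪α, coroot' θ⟫ with hcdef
  have hθθ : 0 < ⟪θ, θ⟫ := inner_self_pos' (D.hnz θ hθ)
  have hc0 : 0 ≤ c := by
    rw [hcdef, coroot', real_inner_smul_right]
    have := theta_inner_nonneg D θ hθ hθhigh hα
    rw [real_inner_comm] at this
    positivity
  rcases D.hcrys θ hθ α hα with ⟨z, hz⟩
  have hsref : sref θ α = α - c • θ := by
    rw [hcdef, coroot', real_inner_smul_right, sref, coroot', smul_smul, mul_comm]
  by_cases hc : c = 0
  · exact Or.inl hc
  · have hc1 : 1 ≤ c := by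
      have hz0 : (0:ℝ) ≤ (z:ℝ) := by rw [← hz]; exact hc0
      have hz0' : 0 ≤ z := by exact_mod_cast hz0
      have : z ≠ 0 := by intro h; rw [h] at hz; exact hc (by rw [hcdef, hz]; norm_num)
      have : 1 ≤ z := by omega
      rw [hcdef, hz]; exact_mod_cast this
    -- sref θ α must be the negative of a positive root
    have hneg : -(sref θ α) ∈ D.Rpos := by
      rcases D.hrefl θ hθ α hα with h | h
      · exfalso
        have hNNC1 : NNC D (sref θ α) := NNC_root D h
        have hNNC2 : NNC D (-(sref θ α)) := by
          rw [hsref]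
          have : -(α - c • θ) = (θ - α) + (c - 1) • θ := by
            rw [sub_smul, one_smul]; abel
          rw [this]
          exact NNC_add D (NNC_theta_sub D θ hθ hθhigh hα)
            (NNC_smul D _ (by linarith) (NNC_root D hθ))
        have hz0 := NNC_eq_zero D hNNC1 hNNC2
        rw [hsref] at hz0
        have hα0 : α = c • θ := by
          linear_combination (norm := module) hz0
        have h6 := D.hred θ hθ c (by rw [← hα0]; exact hα)
        rw [h6, one_smul] at hα0
        exact hne hα0
      · exact h
    set γ := -(sref θ α) with hγdef
    have hγR : γ ∈ D.Rpos := hneg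
    have hγeq : γ = c • θ - α := by rw [hγdef, hsref]; abel
    -- show c ≤ 1
    have hcle : c ≤ 1 := by
      by_contra hgt
      push_neg at hgt
      have hc2 : 2 ≤ c := by
        have : 1 < z := by
          have : (1:ℝ) < (z:ℝ) := by rw [← hz, ← hcdef]; exact hgt
          exact_mod_cast this
        have : 2 ≤ z := by omega
        rw [hcdef, hz]; exact_mod_cast this
      have hNNC1 : NNC D (θ - γ) := NNC_theta_sub D θ hθ hθhigh hγR
      have hNNC2 : NNC D (-(θ - γ)) := by
        have : -(θ - γ) = (c - 2) • θ + (θ - α) := by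
          rw [hγeq, sub_smul]; push_cast; module
        rw [this]
        exact NNC_add D (NNC_smul D _ (by linarith) (NNC_root D hθ))
          (NNC_theta_sub D θ hθ hθhigh hα)
      have hθγ : θ - γ = 0 := NNC_eq_zero D hNNC1 hNNC2
      have hγθ : θ = γ := sub_eq_zero.mp hθγ
      have h5 : θ = c • θ - α := hγθ.trans hγeq
      have hαeq : α = (c - 1) • θ := by
        rw [sub_smul, one_smul]
        linear_combination (norm := module) h5
      have h6 := D.hred θ hθ (c - 1) (by rw [← hαeq]; exact hα)
      rw [h6, one_smul] at hαeq
      exact hne hαeq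
    have hceq : c = 1 := le_antisymm hcle hc1
    refine Or.inr ⟨hceq, ?_⟩
    have : γ = θ - α := by rw [hγeq, hceq, one_smul]
    rwa [← this]

end Theta

section Intervals

lemma sepA {s t : ℝ} (hs0 : 0 < s) (hs1 : s < 1) (ht0 : 0 < t) (ht1 : t < 1) (k : ℤ) :
    ¬ (s + (k:ℝ) < 0 ∧ 0 < t + (k:ℝ)) := by
  rintro ⟨h1, h2⟩
  rcases le_or_gt 0 k with h | h
  · have : (0:ℝ) ≤ (k:ℝ) := by exact_mod_cast h
    linarith
  · have hk : k ≤ -1 := by omega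
    have : (k:ℝ) ≤ -1 := by exact_mod_cast hk
    linarith

lemma sepB {s t : ℝ} (hs0 : 0 < s) (hs1 : s < 1) (ht0 : -1 < t) (ht1 : t < 0) (k : ℤ) :
    ¬ (s + (k:ℝ) < 0 ∧ 0 < t + (k:ℝ)) := by
  rintro ⟨h1, h2⟩
  have hk : k ≤ -1 := by
    by_contra h
    push_neg at h
    have : (0:ℝ) ≤ (k:ℝ) := by exact_mod_cast (by omega : 0 ≤ k)
    linarith
  have : (k:ℝ) ≤ -1 := by exact_mod_cast hk
  linarith

lemma sepC {s t : ℝ} (hs0 : 0 < s) (hs1 : s < 1) (ht0 : -1 < t) (ht1 : t < 0) (k : ℤ) :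
    (t + (k:ℝ) < 0 ∧ 0 < s + (k:ℝ)) ↔ k = 0 := by
  constructor
  · rintro ⟨h1, h2⟩
    by_contra h
    rcases lt_or_gt_of_ne h with h' | h'
    · have : (k:ℝ) ≤ -1 := by exact_mod_cast (by omega : k ≤ -1)
      linarith
    · have : (1:ℝ) ≤ (k:ℝ) := by exact_mod_cast (by omega : 1 ≤ k)
      linarith
  · rintro rfl
    constructor <;> simp <;> linarith

lemma sepD {s t : ℝ} (hs0 : 0 < s) (hs1 : s < 1) (ht0 : 1 < t) (ht1 : t < 2) (k : ℤ) :
    (s + (k:ℝ) < 0 ∧ 0 < t + (k:ℝ)) ↔ k = -1 := by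
  constructor
  · rintro ⟨h1, h2⟩
    by_contra h
    rcases lt_or_gt_of_ne h with h' | h'
    · have : (k:ℝ) ≤ -2 := by exact_mod_cast (by omega : k ≤ -2)
      linarith
    · have : (0:ℝ) ≤ (k:ℝ) := by exact_mod_cast (by omega : 0 ≤ k)
      linarith
  · rintro rfl
    push_cast
    constructor <;> linarith

lemma sepE {s t : ℝ} (hs0 : 0 < s) (hs1 : s < 1) (ht0 : 1 < t) (ht1 : t < 2) (k : ℤ) :
    ¬ (t + (k:ℝ) < 0 ∧ 0 < s + (k:ℝ)) := by
  rintro ⟨h1, h2⟩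
  have hk : k ≤ -2 := by
    by_contra h
    push_neg at h
    have : (-1:ℝ) ≤ (k:ℝ) := by exact_mod_cast (by omega : -1 ≤ k)
    linarith
  have : (k:ℝ) ≤ -2 := by exact_mod_cast hk
  linarith

end Intervals

section Fund

variable {n : ℕ} (D : RSData V n) (θ : V) (p₀ : V)

lemma genRoot_mem (hθ : θ ∈ D.Rpos) (i : Gen n) : genRoot D θ i ∈ D.Rpos := by
  cases i with
  | none => exact hθ
  | some j => exact D.hsimple j

lemma sgen_some (j : Fin n) (x : V) : sgen D θ (some j) x = sref (D.simple j) x := by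
  show aref (D.simple j) (((0:ℤ):ℝ)) x = sref (D.simple j) x
  simp [aref, sref]

lemma sgen_none (x : V) : sgen D θ none x = x - (⟪x, θ⟫ - 1) • coroot' θ := by
  show x - (⟪x, θ⟫ + ((-1:ℤ):ℝ)) • coroot' θ = x - (⟪x, θ⟫ - 1) • coroot' θ
  rw [show ⟪x, θ⟫ + ((-1:ℤ):ℝ) = ⟪x, θ⟫ - 1 by push_cast; ring]

lemma val_some_ne (hp₀ : ∀ α ∈ D.Rpos, 0 < ⟪p₀, α⟫ ∧ ⟪p₀, α⟫ < 1) (j : Fin n)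
    {α : V} (hα : α ∈ D.Rpos) (hne : α ≠ D.simple j) :
    0 < ⟪sgen D θ (some j) p₀, α⟫ ∧ ⟪sgen D θ (some j) p₀, α⟫ < 1 := by
  rw [sgen_some, inner_sref]
  exact hp₀ _ (sref_simple_mem D j hα hne)

lemma val_some_eq (j : Fin n) :
    ⟪sgen D θ (some j) p₀, D.simple j⟫ = -⟪p₀, D.simple j⟫ := by
  rw [sgen_some]
  exact sref_inner_self _ _ (D.hnz _ (D.hsimple j))

lemma val_none_eq (hθ : θ ∈ D.Rpos) : ⟪sgen D θ none p₀, θ⟫ = 2 - ⟪p₀, θ⟫ := by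
  rw [sgen_none, inner_sub_left, real_inner_smul_left, inner_coroot'_self θ (D.hnz θ hθ)]
  ring

lemma val_none_ne (hθ : θ ∈ D.Rpos)
    (hθhigh : ∀ β ∈ D.Rpos, ∃ c : Fin n → ℝ, (∀ i, 0 ≤ c i) ∧
      θ - β = ∑ i, c i • D.simple i)
    (hp₀ : ∀ α ∈ D.Rpos, 0 < ⟪p₀, α⟫ ∧ ⟪p₀, α⟫ < 1)
    {α : V} (hα : α ∈ D.Rpos) (hne : α ≠ θ) :
    0 < ⟪sgen D θ none p₀, α⟫ ∧ ⟪sgen D θ none p₀, α⟫ < 1 := by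
  have hval : ⟪sgen D θ none p₀, α⟫
      = ⟪p₀, α⟫ - (⟪p₀, θ⟫ - 1) * ⟪α, coroot' θ⟫ := by
    rw [sgen_none, inner_sub_left, real_inner_smul_left, real_inner_comm (coroot' θ) α]
  rcases theta_pairing D θ hθ hθhigh hα hne with h | ⟨h, hmem⟩
  · rw [hval, h]
    have := hp₀ α hα
    constructor <;> linarith [this.1, this.2]
  · rw [hval, h]
    have h1 := hp₀ α hα
    have h2 := hp₀ (θ - α) hmem
    rw [inner_sub_right] at h2
    constructor <;> linarith [h1.1, h1.2, h2.1, h2.2]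

lemma sep_fund_some₁ (hp₀ : ∀ α ∈ D.Rpos, 0 < ⟪p₀, α⟫ ∧ ⟪p₀, α⟫ < 1) (j : Fin n) :
    sepPos D.Rpos p₀ (sgen D θ (some j) p₀) = ∅ := by
  ext ⟨α, k⟩
  simp only [sepPos, Set.mem_setOf_eq, Set.mem_empty_iff_false, iff_false, not_and]
  intro hα
  rw [← not_and]
  have h := hp₀ _ hα
  by_cases hne : α = D.simple j
  · have hval : ⟪sgen D θ (some j) p₀, α⟫ = -⟪p₀, α⟫ := by
      rw [hne]; exact val_some_eq D θ p₀ j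
    rw [hval]
    exact sepB h.1 h.2 (by linarith [h.2]) (by linarith [h.1]) k
  · have h' := val_some_ne D θ p₀ hp₀ j hα hne
    exact sepA h.1 h.2 h'.1 h'.2 k

lemma sep_fund_some₂ (hp₀ : ∀ α ∈ D.Rpos, 0 < ⟪p₀, α⟫ ∧ ⟪p₀, α⟫ < 1) (j : Fin n) :
    sepPos D.Rpos (sgen D θ (some j) p₀) p₀ = {(D.simple j, 0)} := by
  ext ⟨α, k⟩
  simp only [sepPos, Set.mem_setOf_eq, Set.mem_singleton_iff, Prod.mk.injEq]
  constructor
  · rintro ⟨hα, h1, h2⟩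
    have h := hp₀ _ hα
    by_cases hne : α = D.simple j
    · have hval : ⟪sgen D θ (some j) p₀, α⟫ = -⟪p₀, α⟫ := by
        rw [hne]; exact val_some_eq D θ p₀ j
      rw [hval] at h1
      exact ⟨hne, (sepC h.1 h.2 (by linarith [h.2]) (by linarith [h.1]) k).1 ⟨h1, h2⟩⟩
    · exfalso
      have h' := val_some_ne D θ p₀ hp₀ j hα hne
      exact sepA h'.1 h'.2 h.1 h.2 k ⟨h1, h2⟩
  · rintro ⟨rfl, rfl⟩
    have h := hp₀ (D.simple j) (D.hsimple j)
    refine ⟨D.hsimple j, ?_, ?_⟩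
    · rw [val_some_eq D θ p₀ j]
      push_cast
      linarith [h.1]
    · push_cast
      linarith [h.1]

lemma sep_fund_none₁ (hθ : θ ∈ D.Rpos)
    (hθhigh : ∀ β ∈ D.Rpos, ∃ c : Fin n → ℝ, (∀ i, 0 ≤ c i) ∧
      θ - β = ∑ i, c i • D.simple i)
    (hp₀ : ∀ α ∈ D.Rpos, 0 < ⟪p₀, α⟫ ∧ ⟪p₀, α⟫ < 1) :
    sepPos D.Rpos p₀ (sgen D θ none p₀) = {(θ, -1)} := by
  ext ⟨α, k⟩
  simp only [sepPos, Set.mem_setOf_eq, Set.mem_singleton_iff, Prod.mk.injEq]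
  constructor
  · rintro ⟨hα, h1, h2⟩
    have h := hp₀ _ hα
    by_cases hne : α = θ
    · have hval : ⟪sgen D θ none p₀, α⟫ = 2 - ⟪p₀, α⟫ := by
        rw [hne]; exact val_none_eq D θ p₀ hθ
      rw [hval] at h2
      exact ⟨hne, (sepD h.1 h.2 (by linarith [h.2]) (by linarith [h.1]) k).1 ⟨h1, h2⟩⟩
    · exfalso
      have h' := val_none_ne D θ p₀ hθ hθhigh hp₀ hα hne
      exact sepA h.1 h.2 h'.1 h'.2 k ⟨h1, h2⟩
  · rintro ⟨heq, rfl⟩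
    have h := hp₀ θ hθ
    refine ⟨by rw [heq]; exact hθ, ?_, ?_⟩
    · rw [heq]
      push_cast
      linarith [h.2]
    · rw [heq, val_none_eq D θ p₀ hθ]
      push_cast
      linarith [h.2]

lemma sep_fund_none₂ (hθ : θ ∈ D.Rpos)
    (hθhigh : ∀ β ∈ D.Rpos, ∃ c : Fin n → ℝ, (∀ i, 0 ≤ c i) ∧
      θ - β = ∑ i, c i • D.simple i)
    (hp₀ : ∀ α ∈ D.Rpos, 0 < ⟪p₀, α⟫ ∧ ⟪p₀, α⟫ < 1) :
    sepPos D.Rpos (sgen D θ none p₀) p₀ = ∅ := by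
  ext ⟨α, k⟩
  simp only [sepPos, Set.mem_setOf_eq, Set.mem_empty_iff_false, iff_false, not_and]
  intro hα
  rw [← not_and]
  have h := hp₀ _ hα
  by_cases hne : α = θ
  · have hval : ⟪sgen D θ none p₀, α⟫ = 2 - ⟪p₀, α⟫ := by
      rw [hne]; exact val_none_eq D θ p₀ hθ
    rw [hval]
    exact sepE h.1 h.2 (by linarith [h.2]) (by linarith [h.1]) k
  · have h' := val_none_ne D θ p₀ hθ hθhigh hp₀ hα hne
    exact sepA h'.1 h'.2 h.1 h.2 k

end Fund

section Transport

variable {n : ℕ} (D : RSData V n)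

lemma ncard_singleton' (a : V × ℤ) : Nat.card ({a} : Set (V × ℤ)) = 1 := by
  rw [Nat.card_coe_set_eq, Set.ncard_singleton]

lemma ncard_empty' : Nat.card (∅ : Set (V × ℤ)) = 0 := by
  rw [Nat.card_coe_set_eq, Set.ncard_empty]

lemma inner_w_right (l : List V) (t u δ : V) :
    ⟪wl l u + t, δ⟫ = ⟪u, wl l.reverse δ⟫ + ⟪t, δ⟫ := by
  rw [inner_add_left, wl_adjoint]

lemma inner_w_image (l : List V) (hl : ∀ a ∈ l, a ∈ D.Rpos) (t u e : V) :
    ⟪wl l u + t, wl l e⟫ = ⟪u, e⟫ + ⟪t, wl l e⟫ := by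
  rw [inner_w_right, wl_inv D l hl]

lemma mem_sep_transport (l : List V) (hl : ∀ a ∈ l, a ∈ D.Rpos) (t : V)
    (ht : IntPair D t) (u v δ : V) (k : ℤ)
    (h : (δ, k) ∈ sepPos D.Rpos (wl l u + t) (wl l v + t)) :
    δ ∈ D.Rpos ∧ ∃ (ε : V) (k' : ℤ),
      ((ε, k') ∈ sepPos D.Rpos u v ∧ wl l ε = δ ∧ (k:ℝ) = (k':ℝ) - ⟪t, δ⟫) ∨
      ((ε, k') ∈ sepPos D.Rpos v u ∧ wl l ε = -δ ∧ (k:ℝ) = -(k':ℝ) - ⟪t, δ⟫) := by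
  obtain ⟨hδ, h1, h2⟩ := h
  simp only at h1 h2
  refine ⟨hδ, ?_⟩
  rcases ht δ hδ with ⟨z, hz⟩
  rw [inner_w_right, hz] at h1 h2
  have hInR : InR D (wl l.reverse δ) :=
    wl_InR D (fun b hb => hl b (List.mem_reverse.1 hb)) (Or.inl hδ)
  rcases hInR with hε | hε
  · refine ⟨wl l.reverse δ, k + z, Or.inl ⟨⟨hε, ?_, ?_⟩, ?_, ?_⟩⟩
    · push_cast; linarith
    · push_cast; linarith
    · exact wl_inv' D l hl δ
    · rw [hz]; push_cast; ring
  · refine ⟨-(wl l.reverse δ), -(k + z), Or.inr ⟨⟨hε, ?_, ?_⟩, ?_, ?_⟩⟩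
    · rw [inner_neg_right]; push_cast; linarith
    · rw [inner_neg_right]; push_cast; linarith
    · rw [wl_neg, wl_inv' D l hl δ]
    · rw [hz]; push_cast; ring

lemma sep_reflect (l : List V) (hl : ∀ a ∈ l, a ∈ D.Rpos) (t : V) (ht : IntPair D t)
    (β₀ : V) (hβ₀ : β₀ ∈ D.Rpos) (k₀ : ℤ) (u v : V)
    (hsep1 : sepPos D.Rpos u v = {(β₀, k₀)}) (hsep0 : sepPos D.Rpos v u = ∅)
    (hu : ⟪u, β₀⟫ + (k₀:ℝ) < 0) (hv : 0 < ⟪v, β₀⟫ + (k₀:ℝ)) :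
    ∃ m : ℤ,
      (wl l β₀ ∈ D.Rpos →
        sepPos D.Rpos (wl l u + t) (wl l v + t) = {(wl l β₀, m)} ∧
        sepPos D.Rpos (wl l v + t) (wl l u + t) = ∅) ∧
      (wl l β₀ ∉ D.Rpos →
        sepPos D.Rpos (wl l v + t) (wl l u + t) = {(-wl l β₀, m)} ∧
        sepPos D.Rpos (wl l u + t) (wl l v + t) = ∅) := by
  obtain ⟨zA, hzA⟩ := IntPair_inner D ht (wl_InR D hl (Or.inl hβ₀))
  refine ⟨if wl l β₀ ∈ D.Rpos then k₀ - zA else zA - k₀, ?_, ?_⟩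
  · intro hA
    rw [if_pos hA]
    constructor
    · ext ⟨δ, k⟩
      constructor
      · intro h
        obtain ⟨hδ, ε, k', hcase⟩ := mem_sep_transport D l hl t ht u v δ k h
        rcases hcase with ⟨hmem, hwl, hk⟩ | ⟨hmem, hwl, hk⟩
        · rw [hsep1, Set.mem_singleton_iff, Prod.mk.injEq] at hmem
          obtain ⟨he, hke⟩ := hmem
          rw [he] at hwl
          rw [hke] at hk
          have hδeq : δ = wl l β₀ := hwl.symm
          subst hδeq
          have hcast : (k:ℝ) = ((k₀ - zA : ℤ):ℝ) := by rw [hk, hzA]; push_cast; ring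
          have hkk : k = k₀ - zA := by exact_mod_cast hcast
          subst hkk
          rfl
        · rw [hsep0] at hmem
          exact absurd hmem (Set.notMem_empty _)
      · intro h
        rw [Set.mem_singleton_iff, Prod.mk.injEq] at h
        obtain ⟨h1, h2⟩ := h
        subst h1
        subst h2
        refine ⟨hA, ?_, ?_⟩
        · show ⟪wl l u + t, wl l β₀⟫ + ((k₀ - zA : ℤ):ℝ) < 0
          rw [inner_w_image D l hl, hzA]
          push_cast
          linarith
        · show 0 < ⟪wl l v + t, wl l β₀⟫ + ((k₀ - zA : ℤ):ℝ)
          rw [inner_w_image D l hl, hzA]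
          push_cast
          linarith
    · ext ⟨δ, k⟩
      simp only [Set.mem_empty_iff_false, iff_false]
      intro h
      obtain ⟨hδ, ε, k', hcase⟩ := mem_sep_transport D l hl t ht v u δ k h
      rcases hcase with ⟨hmem, hwl, hk⟩ | ⟨hmem, hwl, hk⟩
      · rw [hsep0] at hmem
        exact absurd hmem (Set.notMem_empty _)
      · rw [hsep1, Set.mem_singleton_iff, Prod.mk.injEq] at hmem
        obtain ⟨he, hke⟩ := hmem
        rw [he] at hwl
        exact absurd (hwl ▸ hA) (D.hdisj δ hδ)
  · intro hA
    rw [if_neg hA]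
    have hmA : -(wl l β₀) ∈ D.Rpos := by
      rcases wl_InR D hl (Or.inl hβ₀) with h | h
      · exact absurd h hA
      · exact h
    constructor
    · ext ⟨δ, k⟩
      constructor
      · intro h
        obtain ⟨hδ, ε, k', hcase⟩ := mem_sep_transport D l hl t ht v u δ k h
        rcases hcase with ⟨hmem, hwl, hk⟩ | ⟨hmem, hwl, hk⟩
        · rw [hsep0] at hmem
          exact absurd hmem (Set.notMem_empty _)
        · rw [hsep1, Set.mem_singleton_iff, Prod.mk.injEq] at hmem
          obtain ⟨he, hke⟩ := hmem
          rw [he] at hwl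
          rw [hke] at hk
          have hδeq : δ = -(wl l β₀) := by rw [hwl, neg_neg]
          subst hδeq
          have hzδ : ⟪t, -(wl l β₀)⟫ = -(zA:ℝ) := by rw [inner_neg_right, hzA]
          rw [hzδ] at hk
          have hcast : (k:ℝ) = ((zA - k₀ : ℤ):ℝ) := by rw [hk]; push_cast; ring
          have hkk : k = zA - k₀ := by exact_mod_cast hcast
          subst hkk
          rfl
      · intro h
        rw [Set.mem_singleton_iff, Prod.mk.injEq] at h
        obtain ⟨h1, h2⟩ := h
        subst h1
        subst h2
        refine ⟨hmA, ?_, ?_⟩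
        · show ⟪wl l v + t, -(wl l β₀)⟫ + ((zA - k₀ : ℤ):ℝ) < 0
          rw [inner_neg_right, inner_w_image D l hl, hzA]
          push_cast
          linarith
        · show 0 < ⟪wl l u + t, -(wl l β₀)⟫ + ((zA - k₀ : ℤ):ℝ)
          rw [inner_neg_right, inner_w_image D l hl, hzA]
          push_cast
          linarith
    · ext ⟨δ, k⟩
      simp only [Set.mem_empty_iff_false, iff_false]
      intro h
      obtain ⟨hδ, ε, k', hcase⟩ := mem_sep_transport D l hl t ht u v δ k h
      rcases hcase with ⟨hmem, hwl, hk⟩ | ⟨hmem, hwl, hk⟩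
      · rw [hsep1, Set.mem_singleton_iff, Prod.mk.injEq] at hmem
        obtain ⟨he, hke⟩ := hmem
        rw [he] at hwl
        exact absurd (hwl ▸ hδ) hA
      · rw [hsep0] at hmem
        exact absurd hmem (Set.notMem_empty _)

end Transport

section Crossing

variable {n : ℕ} (D : RSData V n) (θ p₀ : V)

lemma genRoot_some (j : Fin n) : genRoot D θ (some j) = D.simple j := rfl

lemma genRoot_none : genRoot D θ none = θ := rfl

lemma genK_some (j : Fin n) : (genK (some j) : ℤ) = 0 := rfl

lemma genK_none : (genK (none : Gen n) : ℤ) = -1 := rfl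

lemma crossing_card (hθ : θ ∈ D.Rpos)
    (hθhigh : ∀ β ∈ D.Rpos, ∃ c : Fin n → ℝ, (∀ i, 0 ≤ c i) ∧
      θ - β = ∑ i, c i • D.simple i)
    (hp₀ : ∀ α ∈ D.Rpos, 0 < ⟪p₀, α⟫ ∧ ⟪p₀, α⟫ < 1)
    (l : List V) (hl : ∀ a ∈ l, a ∈ D.Rpos) (t : V) (ht : IntPair D t) (i : Gen n)
    (x y : V) (hx : x = wl l p₀ + t) (hy : y = wl l (sgen D θ i p₀) + t)
    (S : ℝ)
    (hS : S = ⟪x, if wl l (genRoot D θ i) ∈ D.Rpos then wl l (genRoot D θ i)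
                  else -wl l (genRoot D θ i)⟫ +
        (if wl l (genRoot D θ i) ∈ D.Rpos
         then ((genK i : ℤ):ℝ) - ⟪t, wl l (genRoot D θ i)⟫
         else ⟪t, wl l (genRoot D θ i)⟫ - ((genK i : ℤ):ℝ))) :
    S ≠ 0 ∧
    (S < 0 → Nat.card (sepPos D.Rpos x y) = 1 ∧ Nat.card (sepPos D.Rpos y x) = 0) ∧
    (0 < S → Nat.card (sepPos D.Rpos x y) = 0 ∧ Nat.card (sepPos D.Rpos y x) = 1) := by
  cases i with
  | some j =>
      have hβ₀ : D.simple j ∈ D.Rpos := D.hsimple j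
      have hs := hp₀ (D.simple j) hβ₀
      obtain ⟨m, hpos, hneg⟩ := sep_reflect D l hl t ht (D.simple j) hβ₀ 0
        (sgen D θ (some j) p₀) p₀
        (sep_fund_some₂ D θ p₀ hp₀ j) (sep_fund_some₁ D θ p₀ hp₀ j)
        (by rw [val_some_eq D θ p₀ j]; push_cast; linarith [hs.1])
        (by push_cast; linarith [hs.1])
      rw [genRoot_some] at hS
      by_cases hA : wl l (D.simple j) ∈ D.Rpos
      · obtain ⟨h1, h2⟩ := hpos hA
        have hSval : S = ⟪p₀, D.simple j⟫ := by
          rw [hS, if_pos hA, if_pos hA, hx, inner_w_image D l hl, genK_some]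
          push_cast
          ring
        have hS0 : 0 < S := by rw [hSval]; exact hs.1
        refine ⟨ne_of_gt hS0, fun hc => absurd hc (not_lt.2 (le_of_lt hS0)), fun _ => ?_⟩
        constructor
        · rw [hx, hy, h2, ncard_empty']
        · rw [hx, hy, h1, ncard_singleton']
      · obtain ⟨h1, h2⟩ := hneg hA
        have hSval : S = -⟪p₀, D.simple j⟫ := by
          rw [hS, if_neg hA, if_neg hA, hx, inner_neg_right, inner_w_image D l hl, genK_some]
          push_cast
          ring
        have hS0 : S < 0 := by rw [hSval]; linarith [hs.1]
        refine ⟨ne_of_lt hS0, fun _ => ?_, fun hc => absurd hc (not_lt.2 (le_of_lt hS0))⟩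
        constructor
        · rw [hx, hy, h1, ncard_singleton']
        · rw [hx, hy, h2, ncard_empty']
  | none =>
      have hs := hp₀ θ hθ
      obtain ⟨m, hpos, hneg⟩ := sep_reflect D l hl t ht θ hθ (-1)
        p₀ (sgen D θ none p₀)
        (sep_fund_none₁ D θ p₀ hθ hθhigh hp₀) (sep_fund_none₂ D θ p₀ hθ hθhigh hp₀)
        (by push_cast; linarith [hs.2])
        (by rw [val_none_eq D θ p₀ hθ]; push_cast; linarith [hs.2])
      rw [genRoot_none] at hS
      by_cases hA : wl l θ ∈ D.Rpos
      · obtain ⟨h1, h2⟩ := hpos hA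
        have hSval : S = ⟪p₀, θ⟫ - 1 := by
          rw [hS, if_pos hA, if_pos hA, hx, inner_w_image D l hl, genK_none]
          push_cast
          ring
        have hS0 : S < 0 := by rw [hSval]; linarith [hs.2]
        refine ⟨ne_of_lt hS0, fun _ => ?_, fun hc => absurd hc (not_lt.2 (le_of_lt hS0))⟩
        constructor
        · rw [hx, hy, h1, ncard_singleton']
        · rw [hx, hy, h2, ncard_empty']
      · obtain ⟨h1, h2⟩ := hneg hA
        have hSval : S = 1 - ⟪p₀, θ⟫ := by
          rw [hS, if_neg hA, if_neg hA, hx, inner_neg_right, inner_w_image D l hl, genK_none]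
          push_cast
          ring
        have hS0 : 0 < S := by rw [hSval]; linarith [hs.2]
        refine ⟨ne_of_gt hS0, fun hc => absurd hc (not_lt.2 (le_of_lt hS0)), fun _ => ?_⟩
        constructor
        · rw [hx, hy, h2, ncard_empty']
        · rw [hx, hy, h1, ncard_singleton']
  
end Crossing

section WalkMap

variable {n : ℕ} (D : RSData V n) (θ : V)

lemma walkMap_acc (steps : List (Gen n × Bool)) (g : V → V) :
    steps.foldl (fun g s => if s.2 = true then g ∘ sgen D θ s.1 else g) g
      = g ∘ walkMap D θ steps := by
  induction steps generalizing g with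
  | nil => rfl
  | cons s rest ih =>
      show List.foldl _ (if s.2 = true then g ∘ sgen D θ s.1 else g) rest = _
      rw [ih]
      have : walkMap D θ (s :: rest)
          = (if s.2 = true then id ∘ sgen D θ s.1 else id) ∘ walkMap D θ rest := by
        show List.foldl _ (if s.2 = true then id ∘ sgen D θ s.1 else id) rest = _
        rw [ih]
      rw [this]
      by_cases hb : s.2 = true <;> funext x <;> simp [hb]

lemma walkMap_append (l₁ l₂ : List (Gen n × Bool)) :
    walkMap D θ (l₁ ++ l₂) = walkMap D θ l₁ ∘ walkMap D θ l₂ := by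
  unfold walkMap
  rw [List.foldl_append]
  exact walkMap_acc D θ l₂ _

lemma walkMap_single_cross (i : Gen n) : walkMap D θ [(i, true)] = sgen D θ i := rfl

lemma walkMap_single_fold (i : Gen n) : walkMap D θ [(i, false)] = id := rfl

lemma sgen_eq (i : Gen n) (x : V) :
    sgen D θ i x = sref (genRoot D θ i) x
      - ((genK i : ℤ):ℝ) • coroot' (genRoot D θ i) := by
  show x - (⟪x, genRoot D θ i⟫ + ((genK i : ℤ):ℝ)) • coroot' (genRoot D θ i) = _
  rw [add_smul, sref]
  abel

lemma IntPair_neg_smul_coroot {a : V} (ha : a ∈ D.Rpos) (k : ℝ) (hk : ∃ z : ℤ, k = (z:ℝ)) :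
    IntPair D (-(k • coroot' a)) := by
  intro β hβ
  obtain ⟨z, hz⟩ := hk
  obtain ⟨z', hz'⟩ := IntPair_coroot D ha (Or.inl hβ)
  refine ⟨-(z * z'), ?_⟩
  rw [inner_neg_left, real_inner_smul_left, hz, hz']
  push_cast
  ring

lemma IntPair_sub_smul {t : V} (ht : IntPair D t) (l : List V) (hl : ∀ a ∈ l, a ∈ D.Rpos)
    {a : V} (ha : a ∈ D.Rpos) (k : ℝ) (hk : ∃ z : ℤ, k = (z:ℝ)) :
    IntPair D (t - k • wl l (coroot' a)) := by
  intro β hβ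
  obtain ⟨z, hz⟩ := hk
  obtain ⟨z1, hz1⟩ := ht β hβ
  obtain ⟨z2, hz2⟩ := IntPair_coroot D ha
    (wl_InR D (fun b hb => hl b (List.mem_reverse.1 hb)) (Or.inl hβ))
  refine ⟨z1 - z * z2, ?_⟩
  rw [inner_sub_left, real_inner_smul_left, wl_adjoint, hz, hz1, hz2]
  push_cast
  ring

lemma GW_walkMap (hθ : θ ∈ D.Rpos) (steps : List (Gen n × Bool)) :
    ∃ (lw : List V) (t : V), (∀ a ∈ lw, a ∈ D.Rpos) ∧ IntPair D t ∧
      ∀ x, walkMap D θ steps x = wl lw x + t := by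
  induction steps using List.reverseRecOn with
  | nil => exact ⟨[], 0, by simp, IntPair_zero D, fun x => by
      show x = x + 0
      rw [add_zero]⟩
  | append_singleton l' s ih =>
      obtain ⟨lw, t, h1, h2, h3⟩ := ih
      obtain ⟨i, b⟩ := s
      cases b with
      | false =>
          refine ⟨lw, t, h1, h2, fun x => ?_⟩
          rw [walkMap_append, walkMap_single_fold]
          exact h3 x
      | true =>
          have ha : genRoot D θ i ∈ D.Rpos := genRoot_mem D θ hθ i
          refine ⟨lw ++ [genRoot D θ i], t - ((genK i : ℤ):ℝ) • wl lw (coroot' (genRoot D θ i)),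
            ?_, IntPair_sub_smul D h2 lw h1 ha _ ⟨genK i, rfl⟩, fun x => ?_⟩
          · intro a hamem
            rcases List.mem_append.1 hamem with h | h
            · exact h1 a h
            · rw [List.mem_singleton.1 h]; exact ha
          · rw [walkMap_append, walkMap_single_cross]
            show walkMap D θ l' (sgen D θ i x) = _
            rw [h3, sgen_eq, wl_sub, wl_smul, wl_append]
            have : wl [genRoot D θ i] x = sref (genRoot D θ i) x := rfl
            rw [this]
            abel

lemma Generic_p0 (p₀ : V) (hp₀ : ∀ α ∈ D.Rpos, 0 < ⟪p₀, α⟫ ∧ ⟪p₀, α⟫ < 1) :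
    Generic D p₀ := by
  intro β hβ z heq
  have h := hp₀ β hβ
  rcases le_or_gt z 0 with hz | hz
  · have : (z:ℝ) ≤ 0 := by exact_mod_cast hz
    linarith [h.1]
  · have : (1:ℝ) ≤ (z:ℝ) := by exact_mod_cast hz
    linarith [h.2]

lemma Generic_sgen (p₀ : V) (hgen : Generic D p₀) (hθ : θ ∈ D.Rpos) (i : Gen n) :
    Generic D (sgen D θ i p₀) := by
  have ha : genRoot D θ i ∈ D.Rpos := genRoot_mem D θ hθ i
  have heq : sgen D θ i p₀ = wl [genRoot D θ i] p₀
      + (-(((genK i : ℤ):ℝ) • coroot' (genRoot D θ i))) := by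
    rw [sgen_eq]
    have : wl [genRoot D θ i] p₀ = sref (genRoot D θ i) p₀ := rfl
    rw [this]
    abel
  rw [heq]
  exact Generic_affine D (l := [genRoot D θ i])
    (by intro a hmem; rw [List.mem_singleton.1 hmem]; exact ha)
    (IntPair_neg_smul_coroot D ha _ ⟨genK i, rfl⟩) hgen

end WalkMap

section Floor

variable {n : ℕ} (D : RSData V n)

/-- potential function: `F(x) = ∑_{α>0} ⌊-⟪x,α⟫⌋`. -/
def Fpot (x : V) : ℤ := ∑ α ∈ D.Rpos, ⌊-⟪x, α⟫⌋

lemma sep_mem_iff (x y : V) (hx : Generic D x) (α : V) (k : ℤ) :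
    (α, k) ∈ sepPos D.Rpos x y ↔ α ∈ D.Rpos ∧ ⌊-⟪y, α⟫⌋ < k ∧ k ≤ ⌊-⟪x, α⟫⌋ := by
  simp only [sepPos, Set.mem_setOf_eq]
  constructor
  · rintro ⟨hα, h1, h2⟩
    refine ⟨hα, ?_, ?_⟩
    · rw [Int.floor_lt]
      linarith
    · rw [Int.le_floor]
      linarith
  · rintro ⟨hα, h1, h2⟩
    rw [Int.floor_lt] at h1
    rw [Int.le_floor] at h2
    refine ⟨hα, ?_, ?_⟩
    · have hne : ⟪x, α⟫ ≠ (-k : ℤ) := hx α hα (-k)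
      have : (k:ℝ) ≠ -⟪x, α⟫ := by
        intro hc
        apply hne
        push_cast
        linarith
      have : (k:ℝ) < -⟪x, α⟫ := lt_of_le_of_ne h2 this
      linarith
    · linarith

lemma sep_eq_coe (x y : V) (hx : Generic D x) :
    sepPos D.Rpos x y = ↑(D.Rpos.biUnion (fun α =>
      (Finset.Ioc ⌊-⟪y, α⟫⌋ ⌊-⟪x, α⟫⌋).image (fun k => (α, k)))) := by
  ext ⟨α, k⟩
  rw [sep_mem_iff D x y hx]
  simp only [Finset.coe_biUnion, Set.mem_iUnion, Finset.mem_coe, Finset.mem_image,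
    Finset.mem_Ioc]
  constructor
  · rintro ⟨hα, h1, h2⟩
    exact ⟨α, hα, k, ⟨h1, h2⟩, rfl⟩
  · rintro ⟨a, ha, k', ⟨h1, h2⟩, heq⟩
    rw [Prod.mk.injEq] at heq
    obtain ⟨rfl, rfl⟩ := heq
    exact ⟨ha, h1, h2⟩

lemma card_sep (x y : V) (hx : Generic D x) :
    Nat.card (sepPos D.Rpos x y) = ∑ α ∈ D.Rpos, (⌊-⟪x, α⟫⌋ - ⌊-⟪y, α⟫⌋).toNat := by
  rw [sep_eq_coe D x y hx, Nat.card_coe_set_eq, Set.ncard_coe_finset]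
  rw [Finset.card_biUnion]
  · refine Finset.sum_congr rfl (fun α _ => ?_)
    rw [Finset.card_image_of_injective _ (fun a b h => by simpa using congrArg Prod.snd h),
      Int.card_Ioc]
  · intro a ha b hb hne
    rw [Function.onFun, Finset.disjoint_left]
    intro q hqa hqb
    rw [Finset.mem_image] at hqa hqb
    obtain ⟨k1, _, hk1⟩ := hqa
    obtain ⟨k2, _, hk2⟩ := hqb
    apply hne
    rw [← hk1] at hk2
    exact (congrArg Prod.fst hk2).symm

lemma signed_card (x y : V) (hx : Generic D x) (hy : Generic D y) :
    (Nat.card (sepPos D.Rpos x y) : ℤ) - (Nat.card (sepPos D.Rpos y x) : ℤ)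
      = Fpot D x - Fpot D y := by
  rw [card_sep D x y hx, card_sep D y x hy]
  unfold Fpot
  push_cast
  rw [← Finset.sum_sub_distrib, ← Finset.sum_sub_distrib]
  refine Finset.sum_congr rfl (fun α _ => ?_)
  have h := Int.toNat_sub_toNat_neg (⌊-⟪x, α⟫⌋ - ⌊-⟪y, α⟫⌋)
  rw [neg_sub] at h
  exact h

lemma Fpot_p0 (p₀ : V) (hp₀ : ∀ α ∈ D.Rpos, 0 < ⟪p₀, α⟫ ∧ ⟪p₀, α⟫ < 1) :
    Fpot D p₀ = -(D.Rpos.card : ℤ) := by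
  unfold Fpot
  have h : ∀ α ∈ D.Rpos, ⌊-⟪p₀, α⟫⌋ = -1 := by
    intro α hα
    have h := hp₀ α hα
    rw [Int.floor_eq_iff]
    constructor <;> push_cast <;> linarith [h.1, h.2]
  rw [Finset.sum_congr rfl h, Finset.sum_const, nsmul_eq_mul, mul_neg_one]

end Floor

section MainInd

variable {n : ℕ} (D : RSData V n) (θ p₀ : V)

lemma stepGen_prefix (l' : List (Gen n × Bool)) (s : Gen n × Bool) (j : ℕ)
    (hj : j < l'.length) : stepGen (l' ++ [s]) j = stepGen l' j := by
  unfold stepGen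
  rw [List.getD_append _ _ _ _ hj]

lemma stepGen_last (l' : List (Gen n × Bool)) (s : Gen n × Bool) :
    stepGen (l' ++ [s]) l'.length = s.1 := by
  unfold stepGen
  rw [List.getD_append_right _ _ _ _ (le_refl _), Nat.sub_self]
  rfl

lemma crossAt_prefix (l' : List (Gen n × Bool)) (s : Gen n × Bool) (j : ℕ)
    (hj : j < l'.length) : crossAt (l' ++ [s]) j ↔ crossAt l' j := by
  unfold crossAt
  rw [List.getD_append _ _ _ _ hj]

lemma crossAt_last (l' : List (Gen n × Bool)) (i : Gen n) (b : Bool) :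
    crossAt (l' ++ [(i, b)]) l'.length ↔ b = true := by
  unfold crossAt
  rw [List.getD_append_right _ _ _ _ (le_refl _), Nat.sub_self]
  rfl

lemma wallDir_prefix (l' : List (Gen n × Bool)) (s : Gen n × Bool) (j : ℕ)
    (hj : j < l'.length) : wallDir D θ (l' ++ [s]) j = wallDir D θ l' j := by
  unfold wallDir
  rw [List.take_append_of_le_length (le_of_lt hj), stepGen_prefix l' s j hj]

lemma wallRoot_prefix (l' : List (Gen n × Bool)) (s : Gen n × Bool) (j : ℕ)
    (hj : j < l'.length) : wallRoot D θ (l' ++ [s]) j = wallRoot D θ l' j := by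
  unfold wallRoot
  rw [wallDir_prefix D θ l' s j hj]

lemma wallConst_prefix (l' : List (Gen n × Bool)) (s : Gen n × Bool) (j : ℕ)
    (hj : j < l'.length) : wallConst D θ (l' ++ [s]) j = wallConst D θ l' j := by
  unfold wallConst
  rw [wallDir_prefix D θ l' s j hj, stepGen_prefix l' s j hj,
    List.take_append_of_le_length (le_of_lt hj)]

lemma sideAt_prefix (l' : List (Gen n × Bool)) (s : Gen n × Bool) (j : ℕ)
    (hj : j < l'.length) : sideAt D θ p₀ (l' ++ [s]) j = sideAt D θ p₀ l' j := by
  unfold sideAt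
  rw [wallRoot_prefix D θ l' s j hj, wallConst_prefix D θ l' s j hj,
    List.take_append_of_le_length (le_of_lt hj)]

lemma card_filter_succ (len : ℕ) (P : ℕ → Prop) :
    ((Finset.range (len + 1)).filter P).card
      = ((Finset.range len).filter P).card + if P len then 1 else 0 := by
  rw [Finset.range_add_one, Finset.filter_insert]
  by_cases h : P len
  · rw [if_pos h, if_pos h, Finset.card_insert_of_notMem (by simp)]
  · rw [if_neg h, if_neg h, add_zero]

lemma numPosCross_append (l' : List (Gen n × Bool)) (s : Gen n × Bool) :
    numPosCross D θ p₀ (l' ++ [s]) = numPosCross D θ p₀ l'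
      + if (crossAt (l' ++ [s]) l'.length ∧ sideAt D θ p₀ (l' ++ [s]) l'.length < 0)
        then 1 else 0 := by
  unfold numPosCross
  rw [show (l' ++ [s]).length = l'.length + 1 by simp, Finset.range_add_one,
    Finset.filter_insert]
  have hcong : Finset.filter
        (fun j => crossAt (l' ++ [s]) j ∧ sideAt D θ p₀ (l' ++ [s]) j < 0)
        (Finset.range l'.length)
      = Finset.filter (fun j => crossAt l' j ∧ sideAt D θ p₀ l' j < 0)
        (Finset.range l'.length) := by
    apply Finset.filter_congr
    intro j hj
    rw [Finset.mem_range] at hj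
    rw [crossAt_prefix l' s j hj, sideAt_prefix D θ p₀ l' s j hj]
  by_cases h : crossAt (l' ++ [s]) l'.length ∧ sideAt D θ p₀ (l' ++ [s]) l'.length < 0
  · rw [if_pos h, if_pos h, Finset.card_insert_of_notMem (by simp [Finset.mem_filter]),
      hcong]
  · rw [if_neg h, if_neg h, add_zero, hcong]

lemma numNegCross_append (l' : List (Gen n × Bool)) (s : Gen n × Bool) :
    numNegCross D θ p₀ (l' ++ [s]) = numNegCross D θ p₀ l'
      + if (crossAt (l' ++ [s]) l'.length ∧ 0 < sideAt D θ p₀ (l' ++ [s]) l'.length)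
        then 1 else 0 := by
  unfold numNegCross
  rw [show (l' ++ [s]).length = l'.length + 1 by simp, Finset.range_add_one,
    Finset.filter_insert]
  have hcong : Finset.filter
        (fun j => crossAt (l' ++ [s]) j ∧ 0 < sideAt D θ p₀ (l' ++ [s]) j)
        (Finset.range l'.length)
      = Finset.filter (fun j => crossAt l' j ∧ 0 < sideAt D θ p₀ l' j)
        (Finset.range l'.length) := by
    apply Finset.filter_congr
    intro j hj
    rw [Finset.mem_range] at hj
    rw [crossAt_prefix l' s j hj, sideAt_prefix D θ p₀ l' s j hj]
  by_cases h : crossAt (l' ++ [s]) l'.length ∧ 0 < sideAt D θ p₀ (l' ++ [s]) l'.length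
  · rw [if_pos h, if_pos h, Finset.card_insert_of_notMem (by simp [Finset.mem_filter]),
      hcong]
  · rw [if_neg h, if_neg h, add_zero, hcong]

lemma PosFolded_prefix (l' : List (Gen n × Bool)) (s : Gen n × Bool)
    (h : PosFolded D θ p₀ (l' ++ [s])) : PosFolded D θ p₀ l' := by
  intro j hj hcross
  have hj' : j < (l' ++ [s]).length := by
    rw [List.length_append]
    omega
  have := h j hj' (by rwa [crossAt_prefix l' s j hj])
  rwa [sideAt_prefix D θ p₀ l' s j hj] at this

lemma main_ind (hθ : θ ∈ D.Rpos)
    (hθhigh : ∀ β ∈ D.Rpos, ∃ c : Fin n → ℝ, (∀ i, 0 ≤ c i) ∧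
      θ - β = ∑ i, c i • D.simple i)
    (hp₀ : ∀ α ∈ D.Rpos, 0 < ⟪p₀, α⟫ ∧ ⟪p₀, α⟫ < 1)
    (steps : List (Gen n × Bool)) (hpf : PosFolded D θ p₀ steps) :
    (numPosCross D θ p₀ steps : ℤ) - (numNegCross D θ p₀ steps : ℤ)
      = Fpot D p₀ - Fpot D (walkMap D θ steps p₀) := by
  induction steps using List.reverseRecOn with
  | nil =>
      show ((0:ℕ):ℤ) - ((0:ℕ):ℤ) = Fpot D p₀ - Fpot D p₀
      simp
  | append_singleton l' s ih =>
      have hpfl : PosFolded D θ p₀ l' := PosFolded_prefix D θ p₀ l' s hpf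
      have hIH := ih hpfl
      obtain ⟨i, b⟩ := s
      rw [numPosCross_append, numNegCross_append]
      cases b with
      | false =>
          have hcross : ¬ crossAt (l' ++ [(i, false)]) l'.length := by
            rw [crossAt_last]
            simp
          have hwalk : walkMap D θ (l' ++ [(i, false)]) p₀ = walkMap D θ l' p₀ := by
            rw [walkMap_append, walkMap_single_fold]
            rfl
          rw [if_neg (fun hc => hcross hc.1), if_neg (fun hc => hcross hc.1), hwalk]
          simpa using hIH
      | true =>
          obtain ⟨lw, t, hlw, ht, hw⟩ := GW_walkMap D θ hθ l'
          have htake : (l' ++ [(i, true)]).take l'.length = l' := List.take_left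
          have hsg : stepGen (l' ++ [(i, true)]) l'.length = i :=
            stepGen_last l' (i, true)
          have hcross : crossAt (l' ++ [(i, true)]) l'.length := by
            rw [crossAt_last]
          have hwd : wallDir D θ (l' ++ [(i, true)]) l'.length
              = wl lw (genRoot D θ i) := by
            unfold wallDir
            rw [htake, hsg, hw, hw, wl_zero, zero_add]
            abel
          have hx : walkMap D θ l' p₀ = wl lw p₀ + t := hw p₀
          have hwalk : walkMap D θ (l' ++ [(i, true)]) p₀
              = wl lw (sgen D θ i p₀) + t := by
            rw [walkMap_append, walkMap_single_cross]
            exact hw _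
          have hside : sideAt D θ p₀ (l' ++ [(i, true)]) l'.length
              = ⟪walkMap D θ l' p₀,
                  if wl lw (genRoot D θ i) ∈ D.Rpos then wl lw (genRoot D θ i)
                  else -wl lw (genRoot D θ i)⟫ +
                (if wl lw (genRoot D θ i) ∈ D.Rpos
                 then ((genK i : ℤ):ℝ) - ⟪t, wl lw (genRoot D θ i)⟫
                 else ⟪t, wl lw (genRoot D θ i)⟫ - ((genK i : ℤ):ℝ)) := by
            unfold sideAt wallRoot wallConst
            rw [hwd, htake, hsg, hw 0, wl_zero, zero_add]
          obtain ⟨hne, hlt, hgt⟩ := crossing_card D θ p₀ hθ hθhigh hp₀ lw hlw t ht i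
            (walkMap D θ l' p₀) (walkMap D θ (l' ++ [(i, true)]) p₀) hx hwalk
            (sideAt D θ p₀ (l' ++ [(i, true)]) l'.length) hside
          have hgp := Generic_p0 D p₀ hp₀
          have hgx : Generic D (walkMap D θ l' p₀) := by
            rw [hx]; exact Generic_affine D hlw ht hgp
          have hgy : Generic D (walkMap D θ (l' ++ [(i, true)]) p₀) := by
            rw [hwalk]
            exact Generic_affine D hlw ht (Generic_sgen D θ p₀ hgp hθ i)
          have hsc := signed_card D _ _ hgx hgy
          rcases lt_trichotomy (sideAt D θ p₀ (l' ++ [(i, true)]) l'.length) 0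
            with hS | hS | hS
          · obtain ⟨c1, c0⟩ := hlt hS
            rw [if_pos ⟨hcross, hS⟩, if_neg (fun hc => by linarith [hc.2])]
            rw [c1, c0] at hsc
            push_cast
            push_cast at hIH hsc
            linarith
          · exact absurd hS hne
          · obtain ⟨c0, c1⟩ := hgt hS
            rw [if_neg (fun hc => by linarith [hc.2]), if_pos ⟨hcross, hS⟩]
            rw [c1, c0] at hsc
            push_cast
            push_cast at hIH hsc
            linarith

end MainInd

section Final

variable {n : ℕ} (D : RSData V n)

lemma inner_sum' (s : Finset V) (x : V) : ⟪x, ∑ α ∈ s, α⟫ = ∑ α ∈ s, ⟪x, α⟫ :=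
  inner_sum s (fun a => a) x

lemma inner_two_halfSum (μ : V) : ⟪μ, (2:ℝ) • halfSum D⟫ = ∑ α ∈ D.Rpos, ⟪μ, α⟫ := by
  rw [halfSum, smul_smul]
  norm_num
  exact inner_sum' D.Rpos μ

end Final


/-- For a positively folded alcove walk `p`, the signed length of `p`
equals the signed length of its end alcove: `ε(p) = ε⁺(p) − ε⁻(p) = ε(end(p))`.
In particular, if `p` ends in `t_μ φ(p)` with `φ(p) ∈ W₀`, then
`ε(p) = ⟨μ, 2ρ⟩ − ℓ(φ(p))`. -/
theorem signed_length_of_walk {n : ℕ} (D : RSData V n) (θ : V)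
    (hθ : θ ∈ D.Rpos)
    (hθhigh : ∀ β ∈ D.Rpos, ∃ c : Fin n → ℝ, (∀ i, 0 ≤ c i) ∧
      θ - β = ∑ i, c i • D.simple i)
    (p₀ : V) (hp₀ : ∀ α ∈ D.Rpos, 0 < ⟪p₀, α⟫ ∧ ⟪p₀, α⟫ < 1)
    (steps : List (Gen n × Bool)) (hpf : PosFolded D θ p₀ steps) :
    ((numPosCross D θ p₀ steps : ℤ) - (numNegCross D θ p₀ steps : ℤ)
        = signedLen D.Rpos p₀ (walkMap D θ steps p₀)) ∧
    (∀ (μ : V) (v : V → V), v ∈ W0Set D.Rpos →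
      (∀ α ∈ D.Rpos, ∃ z : ℤ, ⟪μ, α⟫ = (z : ℝ)) →
      (∀ x, walkMap D θ steps x = v x + μ) →
      ((numPosCross D θ p₀ steps : ℝ) - (numNegCross D θ p₀ steps : ℝ)
        = ⟪μ, (2 : ℝ) • halfSum D⟫ - (finLen D p₀ v : ℝ))) := by
  have hgp := Generic_p0 D p₀ hp₀
  obtain ⟨lw, t, hlw, ht, hw⟩ := GW_walkMap D θ hθ steps
  have hgend : Generic D (walkMap D θ steps p₀) := by
    rw [hw p₀]
    exact Generic_affine D hlw ht hgp
  have hmain := main_ind D θ p₀ hθ hθhigh hp₀ steps hpf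
  have hsc := signed_card D p₀ (walkMap D θ steps p₀) hgp hgend
  constructor
  · exact hmain.trans hsc.symm
  · intro μ v hv hμ hend
    obtain ⟨lv, hlv, hveq⟩ := hv
    have hveq' : ∀ x, v x = wl lv x := fun x => by rw [hveq]; rfl
    have hend' : walkMap D θ steps p₀ = v p₀ + μ := hend p₀
    have hvb : ∀ α ∈ D.Rpos, (0 < ⟪v p₀, α⟫ ∧ ⟪v p₀, α⟫ < 1)
        ∨ (-1 < ⟪v p₀, α⟫ ∧ ⟪v p₀, α⟫ < 0) := by
      intro α hα
      rw [hveq' p₀, wl_adjoint]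
      rcases wl_InR D (fun b hb => hlv b (List.mem_reverse.1 hb)) (Or.inl hα) with h | h
      · exact Or.inl (hp₀ _ h)
      · right
        have h2 := hp₀ _ h
        rw [inner_neg_right] at h2
        constructor <;> linarith [h2.1, h2.2]
    have hfl : (finLen D p₀ v : ℕ)
        = (D.Rpos.filter (fun α => ⟪v p₀, α⟫ < 0)).card := by
      unfold finLen
      have hset : {α : V | α ∈ D.Rpos ∧ ⟪v p₀, α⟫ < 0}
          = ↑(D.Rpos.filter (fun α => ⟪v p₀, α⟫ < 0)) := by
        ext a
        rw [Set.mem_setOf_eq, Finset.mem_coe, Finset.mem_filter]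
      rw [hset, Nat.card_coe_set_eq, Set.ncard_coe_finset]
    have hterm : ∀ α ∈ D.Rpos, ((⌊-⟪v p₀ + μ, α⟫⌋ : ℤ) : ℝ)
        = (if ⟪v p₀, α⟫ < 0 then (1:ℝ) else 0) - 1 - ⟪μ, α⟫ := by
      intro α hα
      obtain ⟨z, hz⟩ := hμ α hα
      rw [inner_add_left, hz,
        show -(⟪v p₀, α⟫ + (z:ℝ)) = -⟪v p₀, α⟫ - z by ring, Int.floor_sub_intCast]
      rcases hvb α hα with ⟨h1, h2⟩ | ⟨h1, h2⟩
      · rw [if_neg (by linarith)]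
        have hfloor : ⌊-⟪v p₀, α⟫⌋ = -1 := by
          rw [Int.floor_eq_iff]
          constructor <;> push_cast <;> linarith
        rw [hfloor]
        push_cast
        ring
      · rw [if_pos h2]
        have hfloor : ⌊-⟪v p₀, α⟫⌋ = 0 := by
          rw [Int.floor_eq_iff]
          constructor <;> push_cast <;> linarith
        rw [hfloor]
        push_cast
        ring
    have hFend : (Fpot D (v p₀ + μ) : ℝ)
        = ((D.Rpos.filter (fun α => ⟪v p₀, α⟫ < 0)).card : ℝ) - (D.Rpos.card : ℝ)
          - ⟪μ, (2:ℝ) • halfSum D⟫ := by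
      have h1 : (Fpot D (v p₀ + μ) : ℝ) = ∑ α ∈ D.Rpos, ((⌊-⟪v p₀ + μ, α⟫⌋ : ℤ) : ℝ) := by
        unfold Fpot
        push_cast
        rfl
      rw [h1, Finset.sum_congr rfl hterm, Finset.sum_sub_distrib, Finset.sum_sub_distrib,
        Finset.sum_boole, Finset.sum_const, inner_two_halfSum]
      rw [nsmul_eq_mul]
      ring
    have hcast : (numPosCross D θ p₀ steps : ℝ) - (numNegCross D θ p₀ steps : ℝ)
        = ((Fpot D p₀ : ℤ) : ℝ) - ((Fpot D (walkMap D θ steps p₀) : ℤ) : ℝ) := by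
      exact_mod_cast hmain
    rw [hend', hFend, Fpot_p0 D p₀ hp₀] at hcast
    rw [hcast, hfl]
    push_cast
    ring
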